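/- For a real number a with |a| < 1 and small real ε > 0, the squared modulus of a + iε ± i√(1 − (a+iε)²) equals 1 ± 2ε/√(1−a²) + O(ε²) as ε → 0; in particular, for sufficiently small ε > 0, the root with the minus sign lies strictly inside the unit circle and the root with the plus sign lies strictly outside. -/

import Mathlib

open Filter Topology Asymptotics
open Complex in

lemma pme_key (a : ℝ) (ha : |a| < 1) (σ : ℝ) (hσ : σ = 1 ∨ σ = -1) :
    (fun ε : ℝ => ‖((a : ℂ) + ε * Complex.I +
        (σ : ℂ) * Complex.I * (((1 : ℂ) - ((a : ℂ) + ε * Complex.I) ^ 2) ^ ((1 : ℂ) / 2)))‖ ^ 2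
        - (1 + σ * (2 * ε / Real.sqrt (1 - a ^ 2)))) =O[𝓝 (0 : ℝ)] fun ε => ε ^ 2 := by
  have ha2 : (0 : ℝ) < 1 - a ^ 2 := by
    rcases abs_lt.1 ha with ⟨h1, h2⟩; nlinarith
  set c : ℝ := Real.sqrt (1 - a ^ 2) with hcdef
  have hc : 0 < c := Real.sqrt_pos.2 ha2
  have hc2 : c ^ 2 = 1 - a ^ 2 := Real.sq_sqrt ha2.le
  set w : ℝ → ℂ := fun ε => (a : ℂ) + ε * Complex.I with hw
  set X : ℝ → ℂ := fun ε => (1 : ℂ) - w ε ^ 2 with hX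
  set S : ℝ → ℂ := fun ε => X ε ^ ((1 : ℂ) / 2) with hS
  set F : ℝ → ℂ := fun ε => w ε + (σ : ℂ) * Complex.I * S ε with hF
  set g : ℝ → ℝ := fun ε => (F ε).re ^ 2 + (F ε).im ^ 2 with hg
  set h : ℝ → ℝ := fun ε => g ε - (1 + σ * (2 * ε / c)) with hh
  -- basic values
  have hX0 : X 0 = ((1 - a ^ 2 : ℝ) : ℂ) := by
    show (1:ℂ) - ((a:ℂ) + (0:ℝ) * Complex.I) ^ 2 = _
    push_cast; ring
  have hX0slit : X 0 ∈ Complex.slitPlane := by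
    rw [hX0]
    exact Complex.mem_slitPlane_iff.2 (Or.inl (by rw [Complex.ofReal_re]; exact ha2))
  have hS0 : S 0 = (c : ℂ) := by
    rw [hS]
    show X 0 ^ ((1:ℂ)/2) = (c : ℂ)
    rw [hX0]
    rw [show ((1:ℂ)/2) = ((1/2 : ℝ) : ℂ) by norm_num]
    rw [← Complex.ofReal_cpow ha2.le]
    norm_num [hcdef, Real.sqrt_eq_rpow]
  -- analyticity
  have hwA : AnalyticAt ℝ w 0 := by
    apply analyticAt_const.add
    exact (Complex.ofRealCLM.analyticAt (0:ℝ)).mul analyticAt_const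
  have hXA : AnalyticAt ℝ X 0 := analyticAt_const.sub (hwA.pow 2)
  have hSA : AnalyticAt ℝ S 0 := by
    have : AnalyticAt ℂ (fun z : ℂ => z ^ ((1:ℂ)/2)) (X 0) :=
      (analyticAt_id).cpow analyticAt_const hX0slit
    exact (this.restrictScalars).comp hXA
  have hFA : AnalyticAt ℝ F 0 := hwA.add (analyticAt_const.mul hSA)
  have hreA : AnalyticAt ℝ (fun ε => (F ε).re) 0 :=
    ((Complex.reCLM.analyticAt (F 0)).restrictScalars).comp hFA
  have himA : AnalyticAt ℝ (fun ε => (F ε).im) 0 :=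
    ((Complex.imCLM.analyticAt (F 0)).restrictScalars).comp hFA
  have hgA : AnalyticAt ℝ g 0 := (hreA.pow 2).add (himA.pow 2)
  have hhA : AnalyticAt ℝ h 0 := by
    apply hgA.sub
    apply analyticAt_const.add
    exact analyticAt_const.mul
      (((analyticAt_const.mul analyticAt_id).div analyticAt_const hc.ne'))
  -- derivatives
  have hw0 : w 0 = (a : ℂ) := by
    show (a:ℂ) + (0:ℝ) * Complex.I = _ ; push_cast; ring
  have hwD : HasDerivAt w Complex.I 0 := by
    have h1 : HasDerivAt (fun ε : ℝ => (ε : ℂ)) (Complex.ofRealCLM 1) 0 :=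
      Complex.ofRealCLM.hasDerivAt
    exact ((h1.mul_const Complex.I).const_add (a : ℂ)).congr_deriv (by simp)
  have hXD : HasDerivAt X (-(2 * (a:ℂ) * Complex.I)) 0 := by
    have h2 := (hwD.mul hwD).const_sub (1:ℂ)
    rw [hw0] at h2
    have heq : (fun ε : ℝ => (1:ℂ) - w ε * w ε) = X := by
      funext ε; simp [hX, pow_two]
    rw [← heq]
    exact h2.congr_deriv (by ring)
  have hSD : HasDerivAt S ((1:ℂ)/2 * X 0 ^ ((1:ℂ)/2 - 1) * -(2 * (a:ℂ) * Complex.I)) 0 := by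
    have := ((Complex.hasStrictDerivAt_cpow_const (c := (1:ℂ)/2) hX0slit).hasDerivAt).comp 0 hXD
    exact this
  set D : ℂ := Complex.I + (σ:ℂ) * Complex.I *
      ((1:ℂ)/2 * X 0 ^ ((1:ℂ)/2 - 1) * -(2 * (a:ℂ) * Complex.I)) with hDdef
  have hFD : HasDerivAt F D 0 := hwD.add (hSD.const_mul _)
  have hXpow : X 0 ^ ((1:ℂ)/2 - 1) = ((c⁻¹ : ℝ) : ℂ) := by
    rw [hX0, show ((1:ℂ)/2 - 1) = ((-(1/2) : ℝ) : ℂ) by push_cast; ring,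
      ← Complex.ofReal_cpow ha2.le]
    congr 1
    rw [show (-(1/2) : ℝ) = -(1/2 : ℝ) by norm_num, Real.rpow_neg ha2.le, ← Real.sqrt_eq_rpow]
  have hD : D = ((σ * a / c : ℝ) : ℂ) + Complex.I := by
    rw [hDdef, hXpow]
    apply Complex.ext <;> simp <;> ring
  have hF0 : F 0 = ((a:ℝ) : ℂ) + ((σ * c : ℝ) : ℂ) * Complex.I := by
    show w 0 + (σ:ℂ) * Complex.I * S 0 = _
    rw [hw0, hS0]; push_cast; ring
  have hreD : HasDerivAt (fun ε => (F ε).re) D.re 0 :=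
    Complex.reCLM.hasFDerivAt.comp_hasDerivAt 0 hFD
  have himD : HasDerivAt (fun ε => (F ε).im) D.im 0 :=
    Complex.imCLM.hasFDerivAt.comp_hasDerivAt 0 hFD
  have hgD : HasDerivAt g (2 * (F 0).re ^ 1 * D.re + 2 * (F 0).im ^ 1 * D.im) 0 :=
    (hreD.pow 2).add (himD.pow 2)
  have hlinD : HasDerivAt (fun ε : ℝ => 1 + σ * (2 * ε / c)) (σ * (2 * 1 / c)) 0 :=
    ((((hasDerivAt_id (0:ℝ)).const_mul 2).div_const c).const_mul σ).const_add 1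
  have hval : 2 * (F 0).re ^ 1 * D.re + 2 * (F 0).im ^ 1 * D.im - σ * (2 * 1 / c) = 0 := by
    rw [hF0, hD]
    simp
    field_simp
    linear_combination 2 * σ * hc2
  have hhD : HasDerivAt h 0 0 := by
    have := hgD.sub hlinD
    rwa [hval] at this
  have hσ2 : σ ^ 2 = 1 := by rcases hσ with h | h <;> rw [h] <;> norm_num
  have hh0 : h 0 = 0 := by
    show g 0 - (1 + σ * (2 * (0:ℝ) / c)) = 0
    have : g 0 = (F 0).re ^ 2 + (F 0).im ^ 2 := rfl
    rw [this, hF0]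
    simp
    linear_combination c ^ 2 * hσ2 + hc2
  -- power series conclusion
  obtain ⟨p, hp⟩ := hhA
  have hderiv0 : deriv h 0 = 0 := hhD.deriv
  have hcoeff1 : p.coeff 1 = 0 := by
    have := hp.deriv
    rw [hderiv0] at this
    exact this.symm
  have hps : ∀ y : ℝ, p.partialSum 2 y = 0 := by
    intro y
    have hcoeff0 : p.coeff 0 = 0 := by
      have h0 := hp.coeff_zero (fun _ => (1:ℝ))
      rw [hh0] at h0
      exact h0
    have h1 : p 1 (fun _ => y) = y ^ 1 • p.coeff 1 :=
      FormalMultilinearSeries.apply_eq_pow_smul_coeff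
    simp [FormalMultilinearSeries.partialSum, Finset.sum_range_succ, h1, hcoeff0, hcoeff1]
  have hO := hp.isBigO_sub_partialSum_pow 2
  have hO2 : (fun ε : ℝ => h ε) =O[𝓝 (0:ℝ)] fun ε => ε ^ 2 := by
    refine (hO.congr (fun x => ?_) (fun x => ?_))
    · simp [hps]
    · simp [_root_.sq_abs]
  refine hO2.congr' ?_ EventuallyEq.rfl
  filter_upwards with ε
  have habs : ‖F ε‖ ^ 2 = (F ε).re ^ 2 + (F ε).im ^ 2 := by
    rw [Complex.sq_norm, Complex.normSq_apply]; ring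
  calc h ε = (F ε).re ^ 2 + (F ε).im ^ 2 - (1 + σ * (2 * ε / c)) := rfl
    _ = ‖F ε‖ ^ 2 - (1 + σ * (2 * ε / c)) := by rw [habs]
    _ = _ := rfl

theorem pole_modulus_expansion (a : ℝ) (ha : |a| < 1) :
    ((fun ε : ℝ => ‖((a : ℂ) + ε * Complex.I +
        Complex.I * (((1 : ℂ) - ((a : ℂ) + ε * Complex.I) ^ 2) ^ ((1 : ℂ) / 2)))‖ ^ 2
        - (1 + 2 * ε / Real.sqrt (1 - a ^ 2))) =O[𝓝[>] (0 : ℝ)] fun ε => ε ^ 2) ∧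
    ((fun ε : ℝ => ‖((a : ℂ) + ε * Complex.I -
        Complex.I * (((1 : ℂ) - ((a : ℂ) + ε * Complex.I) ^ 2) ^ ((1 : ℂ) / 2)))‖ ^ 2
        - (1 - 2 * ε / Real.sqrt (1 - a ^ 2))) =O[𝓝[>] (0 : ℝ)] fun ε => ε ^ 2) ∧
    (∀ᶠ ε : ℝ in 𝓝[>] (0 : ℝ),
      ‖((a : ℂ) + (ε : ℂ) * Complex.I -
        Complex.I * (((1 : ℂ) - ((a : ℂ) + (ε : ℂ) * Complex.I) ^ 2) ^ ((1 : ℂ) / 2)))‖ < 1 ∧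
      1 < ‖((a : ℂ) + (ε : ℂ) * Complex.I +
        Complex.I * (((1 : ℂ) - ((a : ℂ) + (ε : ℂ) * Complex.I) ^ 2) ^ ((1 : ℂ) / 2)))‖) := by
  have ha2 : (0 : ℝ) < 1 - a ^ 2 := by
    rcases abs_lt.1 ha with ⟨h1, h2⟩; nlinarith
  set c : ℝ := Real.sqrt (1 - a ^ 2) with hcdef
  have hc : 0 < c := Real.sqrt_pos.2 ha2
  have k1 := pme_key a ha 1 (Or.inl rfl)
  have k2 := pme_key a ha (-1) (Or.inr rfl)
  have h1 : (fun ε : ℝ => ‖((a : ℂ) + ε * Complex.I +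
      Complex.I * (((1 : ℂ) - ((a : ℂ) + ε * Complex.I) ^ 2) ^ ((1 : ℂ) / 2)))‖ ^ 2
      - (1 + 2 * ε / c)) =O[𝓝 (0:ℝ)] fun ε => ε ^ 2 := by
    refine k1.congr_left fun ε => ?_
    have harg : ((1:ℝ):ℂ) * Complex.I * (((1 : ℂ) - ((a : ℂ) + ε * Complex.I) ^ 2) ^ ((1 : ℂ) / 2))
        = Complex.I * (((1 : ℂ) - ((a : ℂ) + ε * Complex.I) ^ 2) ^ ((1 : ℂ) / 2)) := by
      push_cast; ring
    rw [harg]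
    norm_num
    rfl
  have h2 : (fun ε : ℝ => ‖((a : ℂ) + ε * Complex.I -
      Complex.I * (((1 : ℂ) - ((a : ℂ) + ε * Complex.I) ^ 2) ^ ((1 : ℂ) / 2)))‖ ^ 2
      - (1 - 2 * ε / c)) =O[𝓝 (0:ℝ)] fun ε => ε ^ 2 := by
    refine k2.congr_left fun ε => ?_
    have harg : (a : ℂ) + ε * Complex.I + ((-1:ℝ):ℂ) * Complex.I *
          (((1 : ℂ) - ((a : ℂ) + ε * Complex.I) ^ 2) ^ ((1 : ℂ) / 2))
        = (a : ℂ) + ε * Complex.I -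
          Complex.I * (((1 : ℂ) - ((a : ℂ) + ε * Complex.I) ^ 2) ^ ((1 : ℂ) / 2)) := by
      push_cast; ring
    rw [harg]
    ring_nf
    rfl
  refine ⟨h1.mono nhdsWithin_le_nhds, h2.mono nhdsWithin_le_nhds, ?_⟩
  obtain ⟨C₁, hC₁⟩ := h1.bound
  obtain ⟨C₂, hC₂⟩ := h2.bound
  set K : ℝ := max (max C₁ C₂) 1 with hKdef
  have hK1 : (1:ℝ) ≤ K := le_max_right _ _
  have hK : 0 < K := lt_of_lt_of_le one_pos hK1
  have hKC₁ : C₁ ≤ K := le_trans (le_max_left _ _) (le_max_left _ _)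
  have hKC₂ : C₂ ≤ K := le_trans (le_max_right _ _) (le_max_left _ _)
  have hδ : 0 < 2 / (c * K) := by positivity
  filter_upwards [hC₁.filter_mono nhdsWithin_le_nhds, hC₂.filter_mono nhdsWithin_le_nhds,
    self_mem_nhdsWithin, (eventually_lt_nhds hδ).filter_mono nhdsWithin_le_nhds]
    with ε b1 b2 hpos hlt
  have hpos' : (0:ℝ) < ε := hpos
  have hKε : K * ε < 2 / c := by
    calc K * ε < K * (2 / (c * K)) := mul_lt_mul_of_pos_left hlt hK
      _ = 2 / c := by field_simp
  have hKe2 : K * ε ^ 2 < 2 * ε / c := by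
    have : K * ε ^ 2 = (K * ε) * ε := by ring
    rw [this]
    calc (K * ε) * ε < (2 / c) * ε := by exact mul_lt_mul_of_pos_right hKε hpos'
      _ = 2 * ε / c := by ring
  constructor
  · -- minus root strictly inside
    set B := ‖((a : ℂ) + (ε : ℂ) * Complex.I -
        Complex.I * (((1 : ℂ) - ((a : ℂ) + (ε : ℂ) * Complex.I) ^ 2) ^ ((1 : ℂ) / 2)))‖ with hB
    have hBnn : 0 ≤ B := norm_nonneg _
    have b2' : |B ^ 2 - (1 - 2 * ε / c)| ≤ K * ε ^ 2 := by
      have : ‖B ^ 2 - (1 - 2 * ε / c)‖ ≤ C₂ * ‖ε ^ 2‖ := b2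
      rw [Real.norm_eq_abs, Real.norm_eq_abs, _root_.abs_of_nonneg (sq_nonneg ε)] at this
      calc |B ^ 2 - (1 - 2 * ε / c)| ≤ C₂ * ε ^ 2 := this
        _ ≤ K * ε ^ 2 := mul_le_mul_of_nonneg_right hKC₂ (sq_nonneg ε)
    have hsq : B ^ 2 < 1 := by
      have := (abs_le.1 b2').2
      linarith
    nlinarith
  · -- plus root strictly outside
    set A := ‖((a : ℂ) + (ε : ℂ) * Complex.I +
        Complex.I * (((1 : ℂ) - ((a : ℂ) + (ε : ℂ) * Complex.I) ^ 2) ^ ((1 : ℂ) / 2)))‖ with hA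
    have hAnn : 0 ≤ A := norm_nonneg _
    have b1' : |A ^ 2 - (1 + 2 * ε / c)| ≤ K * ε ^ 2 := by
      have : ‖A ^ 2 - (1 + 2 * ε / c)‖ ≤ C₁ * ‖ε ^ 2‖ := b1
      rw [Real.norm_eq_abs, Real.norm_eq_abs, _root_.abs_of_nonneg (sq_nonneg ε)] at this
      calc |A ^ 2 - (1 + 2 * ε / c)| ≤ C₁ * ε ^ 2 := this
        _ ≤ K * ε ^ 2 := mul_le_mul_of_nonneg_right hKC₁ (sq_nonneg ε)
    have hsq : 1 < A ^ 2 := by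
      have := (abs_le.1 b1').1
      linarith
    nlinarith
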